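/- Let V ⊆ ℝ^d be a subspace of dimension k ≥ 1 and let P ∈ ℝ^{d×d} be a matrix such that for some 0 ≤ q < 1 one has ‖(I−P)v‖ ≤ q‖Pv‖ for all v ∈ V. Then dim(V) = dim(PV), and the largest principal angle between V and PV satisfies ∠(V, PV) ≤ q / (1−q²)^{1/2}. -/

import Mathlib

open Filter

noncomputable section

abbrev Euc (d : ℕ) := EuclideanSpace ℝ (Fin d)

/-- Angle between the lines spanned by two vectors. -/
noncomputable def vecAngle {d : ℕ} (v w : Euc d) : ℝ :=
  Real.arccos (|(inner ℝ v w : ℝ)| / (‖v‖ * ‖w‖))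

/-- Largest principal angle between two subspaces of equal dimension. -/
noncomputable def subAngle {d : ℕ} (V W : Submodule ℝ (Euc d)) : ℝ :=
  Real.arccos (sInf {c : ℝ | ∃ v ∈ V, ‖v‖ = 1 ∧
    c = sSup {r : ℝ | ∃ w ∈ W, ‖w‖ = 1 ∧ r = (inner ℝ v w : ℝ)}})

/-- If `V ⊆ ℝ^d` has dimension `k ≥ 1` and the matrix (linear map) `P`
satisfies `‖(I−P)v‖ ≤ q‖Pv‖` on `V` for some `0 ≤ q < 1`, then `dim(PV) = dim V` and
`∠(V, PV) ≤ q/√(1−q²)`. -/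
theorem subAngle_map_le_of_contraction {d k : ℕ} (hk : 1 ≤ k)
    (V : Submodule ℝ (Euc d)) (hV : Module.finrank ℝ V = k)
    (P : Euc d →ₗ[ℝ] Euc d) (q : ℝ) (hq0 : 0 ≤ q) (hq1 : q < 1)
    (hcontr : ∀ v ∈ V, ‖v - P v‖ ≤ q * ‖P v‖) :
    Module.finrank ℝ (V.map P) = Module.finrank ℝ V ∧
    subAngle V (V.map P) ≤ q / Real.sqrt (1 - q ^ 2) := by
  have hq2 : (0:ℝ) ≤ 1 - q ^ 2 := by nlinarith
  set b : ℝ := Real.sqrt (1 - q ^ 2) with hb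
  have hb0 : 0 ≤ b := Real.sqrt_nonneg _
  have hbsq : b ^ 2 = 1 - q ^ 2 := Real.sq_sqrt hq2
  have hbpos : 0 < b := Real.sqrt_pos.2 (by nlinarith)
  -- P is injective on V
  have hPne : ∀ v ∈ V, v ≠ 0 → P v ≠ 0 := by
    intro v hv hvne hPv
    have := hcontr v hv
    rw [hPv] at this
    simp at this
    exact hvne (by simpa using this)
  -- key inner product bound
  have hkey : ∀ v ∈ V, ‖v‖ = 1 → b * ‖P v‖ ≤ (inner ℝ v (P v) : ℝ) := by
    intro v hv hv1
    have h := hcontr v hv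
    have hsq : ‖v - P v‖ ^ 2 ≤ (q * ‖P v‖) ^ 2 := by
      apply pow_le_pow_left₀ (norm_nonneg _) h
    rw [@norm_sub_sq_real] at hsq
    nlinarith [sq_nonneg (b * ‖P v‖ - 1), norm_nonneg (P v)]
  constructor
  · -- finrank
    have hker : LinearMap.ker (P.domRestrict V) = ⊥ := by
      rw [LinearMap.ker_eq_bot']
      rintro ⟨v, hv⟩ hPv
      simp only [LinearMap.domRestrict_apply] at hPv
      by_contra hne
      have hvne : v ≠ 0 := fun h0 => hne (Subtype.ext h0)
      exact hPne v hv hvne hPv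
    have := LinearMap.finrank_range_add_finrank_ker (P.domRestrict V)
    rw [hker, LinearMap.range_domRestrict] at this
    simpa using this
  · -- angle bound
    set W := V.map P with hW
    set S := {c : ℝ | ∃ v ∈ V, ‖v‖ = 1 ∧
      c = sSup {r : ℝ | ∃ w ∈ W, ‖w‖ = 1 ∧ r = (inner ℝ v w : ℝ)}} with hS
    -- S nonempty
    have hVne : ∃ v : Euc d, v ∈ V ∧ ‖v‖ = 1 := by
      have : V ≠ ⊥ := by
        intro h; rw [h] at hV; simp at hV; omega
      obtain ⟨v, hv, hvne⟩ := Submodule.exists_mem_ne_zero_of_ne_bot this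
      refine ⟨‖v‖⁻¹ • v, V.smul_mem _ hv, ?_⟩
      rw [norm_smul, norm_inv, norm_norm, inv_mul_cancel₀ (norm_ne_zero_iff.2 hvne)]
    have hSb : ∀ c ∈ S, b ≤ c := by
      rintro c ⟨v, hv, hv1, rfl⟩
      set T := {r : ℝ | ∃ w ∈ W, ‖w‖ = 1 ∧ r = (inner ℝ v w : ℝ)} with hT
      have hvne : v ≠ 0 := by intro h; rw [h] at hv1; simp at hv1
      have hPvne : P v ≠ 0 := hPne v hv hvne
      have hPvpos : 0 < ‖P v‖ := norm_pos_iff.2 hPvne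
      have hw0 : (‖P v‖⁻¹ • P v) ∈ W := W.smul_mem _ (Submodule.mem_map_of_mem hv)
      have hw0n : ‖(‖P v‖⁻¹ • P v : Euc d)‖ = 1 := by
        rw [norm_smul, norm_inv, norm_norm, inv_mul_cancel₀ hPvpos.ne']
      have hmem : (inner ℝ v (‖P v‖⁻¹ • P v) : ℝ) ∈ T := ⟨_, hw0, hw0n, rfl⟩
      have hbdd : BddAbove T := by
        refine ⟨1, ?_⟩
        rintro r ⟨w, hw, hw1, rfl⟩
        calc (inner ℝ v w : ℝ) ≤ ‖v‖ * ‖w‖ := real_inner_le_norm v w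
          _ = 1 := by rw [hv1, hw1, mul_one]
      have hinner : b ≤ (inner ℝ v (‖P v‖⁻¹ • P v) : ℝ) := by
        rw [real_inner_smul_right, inv_mul_eq_div, le_div_iff₀ hPvpos]
        exact hkey v hv hv1
      exact hinner.trans (le_csSup hbdd hmem)
    have hinf : b ≤ sInf S := by
      obtain ⟨v, hv, hv1⟩ := hVne
      exact le_csInf ⟨_, ⟨v, hv, hv1, rfl⟩⟩ hSb
    have h1 : subAngle V W ≤ Real.arccos b := by
      unfold subAngle
      rw [Real.arccos_eq_pi_div_two_sub_arcsin, Real.arccos_eq_pi_div_two_sub_arcsin]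
      have := Real.monotone_arcsin hinf
      linarith
    refine h1.trans ?_
    rcases eq_or_lt_of_le hq0 with hq | hq
    · rw [← hq] at hb ⊢
      have : b = 1 := by rw [hb]; norm_num
      rw [this, Real.arccos_one]
      positivity
    · have harccos : Real.arccos b = Real.arcsin q := by
        rw [Real.arccos_eq_arcsin hb0, hbsq]
        congr 1
        rw [show 1 - (1 - q^2) = q^2 by ring, Real.sqrt_sq hq0]
      rw [harccos]
      have hx0 : 0 < Real.arcsin q := Real.arcsin_pos.2 hq
      have hx1 : Real.arcsin q < Real.pi / 2 := by
        have := Real.arcsin_lt_pi_div_two (x := q)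
        rw [this]; exact hq1
      have htan : Real.tan (Real.arcsin q) = q / b := by
        rw [Real.tan_eq_sin_div_cos, Real.sin_arcsin (by linarith) hq1.le,
          Real.cos_arcsin]
      calc Real.arcsin q ≤ Real.tan (Real.arcsin q) := (Real.lt_tan hx0 hx1).le
        _ = q / b := htan
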